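/- Assume β ∈ [0,1] and M > 10. There exists a constant C > 0 (depending only on β and M) such that for all ω₁ > 1 one has C¹²⁴[n⁰¹, n⁰¹, n⁰¹](ω₁) ≤ C · ω₁^{4β + 2 − M} and C¹³⁴[n⁰¹, n⁰¹, n⁰¹](ω₁) ≤ C · ω₁^{4β + 2 − M}. -/

import Mathlib

open MeasureTheory Real

noncomputable section

/-- Japanese bracket ⟨ω⟩ = (1 + ω²)^{1/2}. -/
def jb (ω : ℝ) : ℝ := Real.sqrt (1 + ω ^ 2)

/-- n⁰¹(ω) = ⟨ω⟩^{-M/2}. -/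
def n01 (M : ℝ) (ω : ℝ) : ℝ := jb ω ^ (-(M / 2))

/-- The operator C₂₁²³⁴, with ω₂ = ω₃ + ω₄ − ω₁. -/
def C21op (β : ℝ) (k l m : ℝ → ℝ) (ω₁ : ℝ) : ℝ :=
  64 * π ^ 3 * ω₁ ^ (β - 1/2) *
    ∫ ω₃ in (0:ℝ)..(ω₁ / 2), ∫ ω₄ in (ω₁ - ω₃)..ω₁,
      (ω₃ + ω₄ - ω₁) ^ (β + 1/2) * ω₃ ^ β * ω₄ ^ β *
        (k (ω₃ + ω₄ - ω₁) * l ω₃ * m ω₄)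

/-- The operator C₂₂²³⁴, with ω₂ = ω₃ + ω₄ − ω₁. -/
def C22op (β : ℝ) (k l m : ℝ → ℝ) (ω₁ : ℝ) : ℝ :=
  64 * π ^ 3 * ω₁ ^ (β - 1/2) *
    ∫ ω₃ in (ω₁ / 2)..ω₁, ∫ ω₄ in ω₃..ω₁,
      (ω₃ + ω₄ - ω₁) ^ (β + 1/2) * ω₃ ^ β * ω₄ ^ β *
        (k (ω₃ + ω₄ - ω₁) * l ω₃ * m ω₄)

/-- The operator C₃²³⁴, with ω₂ = ω₃ + ω₄ − ω₁. -/
def C3op (β : ℝ) (k l m : ℝ → ℝ) (ω₁ : ℝ) : ℝ :=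
  64 * π ^ 3 * ω₁ ^ (β - 1/2) *
    ∫ ω₃ in (0:ℝ)..ω₁, ∫ ω₄ in Set.Ioi ω₁,
      (ω₃ + ω₄ - ω₁) ^ β * ω₃ ^ (β + 1/2) * ω₄ ^ β *
        (k (ω₃ + ω₄ - ω₁) * l ω₃ * m ω₄)

/-- The operator C₁²³⁴, with ω₂ = ω₃ + ω₄ − ω₁. -/
def C1op (β : ℝ) (k l m : ℝ → ℝ) (ω₁ : ℝ) : ℝ :=
  64 * π ^ 3 * ω₁ ^ β *
    ∫ ω₃ in Set.Ioi ω₁, ∫ ω₄ in Set.Ioi ω₃,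
      (ω₃ + ω₄ - ω₁) ^ β * ω₃ ^ β * ω₄ ^ β *
        (k (ω₃ + ω₄ - ω₁) * l ω₃ * m ω₄)

/-- The full domain of integration {0 ≤ ω₃ ≤ ω₄, ω₃ + ω₄ ≥ ω₁} ⊂ ℝ². -/
def Dom (ω₁ : ℝ) : Set (ℝ × ℝ) := {p | 0 ≤ p.1 ∧ p.1 ≤ p.2 ∧ ω₁ ≤ p.1 + p.2}

/-- The cross-section factor min{√ω₁, √ω₂, √ω₃}, with ω₂ = ω₃ + ω₄ − ω₁,
where p = (ω₃, ω₄). -/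
def crossMin (ω₁ : ℝ) (p : ℝ × ℝ) : ℝ :=
  min (Real.sqrt ω₁) (min (Real.sqrt (p.1 + p.2 - ω₁)) (Real.sqrt p.1))

/-- The operator C^{j₁j₂j₃}[k,l,m](ω₁) where the factor is k(ω_{j₁}) l(ω_{j₂}) m(ω_{j₃}),
with ω₂ = ω₃ + ω₄ − ω₁ and p = (ω₃, ω₄); here the selection of frequencies is passed
as a function `sel : (ℝ × ℝ) → ℝ × ℝ × ℝ` giving (ω_{j₁}, ω_{j₂}, ω_{j₃}). -/
def Cfull (β : ℝ) (k l m : ℝ → ℝ) (sel : ℝ → ℝ × ℝ → ℝ × ℝ × ℝ) (ω₁ : ℝ) : ℝ :=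
  64 * π ^ 3 * ω₁ ^ (β - 1/2) *
    ∫ p in Dom ω₁,
      ((p.1 + p.2 - ω₁) * p.1 * p.2) ^ β * crossMin ω₁ p *
        (k (sel ω₁ p).1 * l (sel ω₁ p).2.1 * m (sel ω₁ p).2.2)

/-- C²³⁴[k,l,m](ω₁): integrand k(ω₂) l(ω₃) m(ω₄). -/
def C234 (β : ℝ) (k l m : ℝ → ℝ) : ℝ → ℝ :=
  Cfull β k l m (fun ω₁ p => (p.1 + p.2 - ω₁, p.1, p.2))

/-- C¹²⁴[k,l,m](ω₁): integrand k(ω₁) l(ω₂) m(ω₄). -/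
def C124 (β : ℝ) (k l m : ℝ → ℝ) : ℝ → ℝ :=
  Cfull β k l m (fun ω₁ p => (ω₁, p.1 + p.2 - ω₁, p.2))

/-- C¹³⁴[k,l,m](ω₁): integrand k(ω₁) l(ω₃) m(ω₄). -/
def C134 (β : ℝ) (k l m : ℝ → ℝ) : ℝ → ℝ :=
  Cfull β k l m (fun ω₁ p => (ω₁, p.1, p.2))

/-- C¹²³[k,l,m](ω₁): integrand k(ω₁) l(ω₂) m(ω₃). -/
def C123 (β : ℝ) (k l m : ℝ → ℝ) : ℝ → ℝ :=
  Cfull β k l m (fun ω₁ p => (ω₁, p.1 + p.2 - ω₁, p.1))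

/-! ### Auxiliary lemmas -/

section Aux

open Set

lemma jb_pos (x : ℝ) : 0 < jb x := Real.sqrt_pos.2 (by positivity)

lemma one_le_jb (x : ℝ) : 1 ≤ jb x := by
  rw [show (1:ℝ) = Real.sqrt 1 by rw [Real.sqrt_one]]
  exact Real.sqrt_le_sqrt (by nlinarith [sq_nonneg x])

lemma le_jb {x : ℝ} (hx : 0 ≤ x) : x ≤ jb x := by
  calc x = Real.sqrt (x ^ 2) := by rw [Real.sqrt_sq hx]
    _ ≤ jb x := Real.sqrt_le_sqrt (by linarith)

lemma jb_mono {x y : ℝ} (hx : 0 ≤ x) (hxy : x ≤ y) : jb x ≤ jb y :=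
  Real.sqrt_le_sqrt (by nlinarith)

lemma jb_rpow (x s : ℝ) : jb x ^ s = (1 + x ^ 2) ^ (s / 2) := by
  rw [jb, Real.sqrt_eq_rpow, ← Real.rpow_mul (by positivity)]
  congr 1; ring

lemma integrable_jb_rpow {s : ℝ} (hs : s < -1) :
    MeasureTheory.Integrable (fun x : ℝ => jb x ^ s) := by
  have h : ((Module.finrank ℝ ℝ : ℕ) : ℝ) < -s := by
    rw [Module.finrank_self]; norm_num; linarith
  have h2 := integrable_rpow_neg_one_add_norm_sq (E := ℝ) (μ := volume) h
  apply h2.congr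
  filter_upwards with x
  rw [jb_rpow]
  norm_num [Real.norm_eq_abs, sq_abs]

lemma sqrt_le_jb_rpow {x : ℝ} (hx : 0 ≤ x) : Real.sqrt x ≤ jb x ^ (1/2 : ℝ) := by
  rw [Real.sqrt_eq_rpow]
  exact Real.rpow_le_rpow hx (le_jb hx) (by norm_num)

lemma integral_Ici_jb_le {s : ℝ} (hs : s < -1) {c : ℝ} (hc : 0 < c) :
    ∫ x in Ici c, jb x ^ s ≤ c ^ (s + 1) / (-(s + 1)) := by
  rw [MeasureTheory.integral_Ici_eq_integral_Ioi]
  have h1 : ∫ x in Ioi c, x ^ s = -c ^ (s + 1) / (s + 1) := integral_Ioi_rpow_of_lt hs hc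
  have h2 : ∫ x in Ioi c, jb x ^ s ≤ ∫ x in Ioi c, x ^ s := by
    apply MeasureTheory.integral_mono_of_nonneg
    · filter_upwards with x using Real.rpow_nonneg (jb_pos x).le s
    · exact integrableOn_Ioi_rpow_of_lt hs hc
    · filter_upwards [MeasureTheory.ae_restrict_mem measurableSet_Ioi] with x hx
      exact Real.rpow_le_rpow_of_nonpos (hc.trans hx) (le_jb (hc.trans hx).le) (by linarith)
  calc ∫ x in Ioi c, jb x ^ s ≤ ∫ x in Ioi c, x ^ s := h2
    _ = c ^ (s + 1) / (-(s + 1)) := by rw [h1, div_neg, neg_div]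

lemma integral_Ici_zero_jb_le : ∫ x in Ici (0:ℝ), jb x ^ (-(3/2) : ℝ) ≤ 3 := by
  have hint : MeasureTheory.Integrable (fun x : ℝ => jb x ^ (-(3/2) : ℝ)) :=
    integrable_jb_rpow (by norm_num)
  have hsplit : Ici (0:ℝ) = Icc 0 1 ∪ Ioi 1 := (Set.Icc_union_Ioi_eq_Ici (by norm_num)).symm
  have hdisj : Disjoint (Icc (0:ℝ) 1) (Ioi 1) := by
    rw [Set.disjoint_left]
    rintro x ⟨_, hx1⟩ hx2
    exact absurd hx1 (not_le.2 hx2)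
  rw [hsplit, MeasureTheory.setIntegral_union hdisj measurableSet_Ioi
    hint.integrableOn hint.integrableOn]
  have h1 : ∫ x in Icc (0:ℝ) 1, jb x ^ (-(3/2) : ℝ) ≤ 1 := by
    calc ∫ x in Icc (0:ℝ) 1, jb x ^ (-(3/2) : ℝ) ≤ ∫ _x in Icc (0:ℝ) 1, (1:ℝ) := by
          apply MeasureTheory.setIntegral_mono_on hint.integrableOn
            (MeasureTheory.integrableOn_const measure_Icc_lt_top.ne) measurableSet_Icc
          intro x _
          exact Real.rpow_le_one_of_one_le_of_nonpos (one_le_jb x) (by norm_num)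
      _ = 1 := by simp [Real.volume_Icc]
  have h2 : ∫ x in Ioi (1:ℝ), jb x ^ (-(3/2) : ℝ) ≤ 2 := by
    have h := integral_Ici_jb_le (s := -(3/2)) (by norm_num) (c := 1) one_pos
    rw [MeasureTheory.integral_Ici_eq_integral_Ioi] at h
    calc ∫ x in Ioi (1:ℝ), jb x ^ (-(3/2) : ℝ) ≤ (1:ℝ) ^ ((-(3/2):ℝ) + 1) / (-((-(3/2):ℝ) + 1)) := h
      _ = 2 := by rw [Real.one_rpow]; norm_num
  linarith

lemma measurableSet_Dom (ω₁ : ℝ) : MeasurableSet (Dom ω₁) := by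
  have h : Dom ω₁ = {p : ℝ × ℝ | 0 ≤ p.1} ∩ {p : ℝ × ℝ | p.1 ≤ p.2}
      ∩ {p : ℝ × ℝ | ω₁ ≤ p.1 + p.2} := by
    ext p; simp [Dom, Set.mem_setOf_eq, and_assoc]
  rw [h]
  exact ((measurableSet_le measurable_const measurable_fst).inter
    (measurableSet_le measurable_fst measurable_snd)).inter
    (measurableSet_le measurable_const (measurable_fst.add measurable_snd))

lemma crossMin_nonneg (ω₁ : ℝ) (p : ℝ × ℝ) : 0 ≤ crossMin ω₁ p :=
  le_min (Real.sqrt_nonneg _) (le_min (Real.sqrt_nonneg _) (Real.sqrt_nonneg _))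

lemma crossMin_le_sqrt_w (ω₁ : ℝ) (p : ℝ × ℝ) :
    crossMin ω₁ p ≤ Real.sqrt (p.1 + p.2 - ω₁) :=
  (min_le_right _ _).trans (min_le_left _ _)

lemma crossMin_le_sqrt_x (ω₁ : ℝ) (p : ℝ × ℝ) : crossMin ω₁ p ≤ Real.sqrt p.1 :=
  (min_le_right _ _).trans (min_le_right _ _)

lemma n01_nonneg (M x : ℝ) : 0 ≤ n01 M x := Real.rpow_nonneg (jb_pos x).le _

/-- The core integral estimate over the domain. -/
lemma core_estimate {b : ℝ} (hb : b < -1) {ω₁ : ℝ} (hω : 1 < ω₁) {F : ℝ × ℝ → ℝ} {D : ℝ}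
    (hD : 0 ≤ D)
    (hF0 : ∀ p ∈ Dom ω₁, 0 ≤ F p)
    (hFle : ∀ p ∈ Dom ω₁, F p ≤ D * (jb p.1 ^ (-(3/2) : ℝ) * jb p.2 ^ b)) :
    ∫ p in Dom ω₁, F p ≤ D * (3 * ((ω₁ / 2) ^ (b + 1) / (-(b + 1)))) := by
  have hω0 : (0:ℝ) < ω₁ := by linarith
  have hg1 : MeasureTheory.Integrable (fun x : ℝ => jb x ^ (-(3/2) : ℝ)) :=
    integrable_jb_rpow (by norm_num)
  have hg2 : MeasureTheory.Integrable (fun x : ℝ => jb x ^ b) := integrable_jb_rpow hb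
  have hgprod : MeasureTheory.Integrable
      (fun p : ℝ × ℝ => jb p.1 ^ (-(3/2) : ℝ) * jb p.2 ^ b) := by
    rw [MeasureTheory.Measure.volume_eq_prod]
    exact hg1.mul_prod hg2
  have hg : MeasureTheory.Integrable
      (fun p : ℝ × ℝ => D * (jb p.1 ^ (-(3/2) : ℝ) * jb p.2 ^ b)) := hgprod.const_mul D
  have hgnn : ∀ p : ℝ × ℝ, 0 ≤ D * (jb p.1 ^ (-(3/2) : ℝ) * jb p.2 ^ b) := fun p =>
    mul_nonneg hD (mul_nonneg (Real.rpow_nonneg (jb_pos _).le _) (Real.rpow_nonneg (jb_pos _).le _))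
  have step1 : ∫ p in Dom ω₁, F p ≤
      ∫ p in Dom ω₁, D * (jb p.1 ^ (-(3/2) : ℝ) * jb p.2 ^ b) := by
    apply MeasureTheory.integral_mono_of_nonneg
    · exact MeasureTheory.ae_restrict_of_forall_mem (measurableSet_Dom ω₁) hF0
    · exact hg.integrableOn
    · exact MeasureTheory.ae_restrict_of_forall_mem (measurableSet_Dom ω₁) hFle
  have hsub : Dom ω₁ ⊆ Ici (0:ℝ) ×ˢ Ici (ω₁ / 2) := by
    rintro ⟨x, y⟩ ⟨h1, h2, h3⟩
    refine ⟨h1, ?_⟩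
    simp only [Set.mem_Ici]
    dsimp only at h2 h3 ⊢
    linarith
  have step2 : ∫ p in Dom ω₁, D * (jb p.1 ^ (-(3/2) : ℝ) * jb p.2 ^ b) ≤
      ∫ p in Ici (0:ℝ) ×ˢ Ici (ω₁ / 2), D * (jb p.1 ^ (-(3/2) : ℝ) * jb p.2 ^ b) :=
    MeasureTheory.setIntegral_mono_set hg.integrableOn
      (Filter.Eventually.of_forall hgnn) (HasSubset.Subset.eventuallyLE hsub)
  have step3 : ∫ p in Ici (0:ℝ) ×ˢ Ici (ω₁ / 2), D * (jb p.1 ^ (-(3/2) : ℝ) * jb p.2 ^ b) =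
      D * ((∫ x in Ici (0:ℝ), jb x ^ (-(3/2) : ℝ)) * ∫ y in Ici (ω₁ / 2), jb y ^ b) := by
    rw [MeasureTheory.integral_const_mul]
    congr 1
    rw [MeasureTheory.Measure.volume_eq_prod]
    exact MeasureTheory.setIntegral_prod_mul (fun x => jb x ^ (-(3/2) : ℝ))
      (fun y => jb y ^ b) _ _
  have hI1 : ∫ x in Ici (0:ℝ), jb x ^ (-(3/2) : ℝ) ≤ 3 := integral_Ici_zero_jb_le
  have hI2 : ∫ y in Ici (ω₁ / 2), jb y ^ b ≤ (ω₁ / 2) ^ (b + 1) / (-(b + 1)) :=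
    integral_Ici_jb_le hb (by linarith)
  have hI2nn : 0 ≤ ∫ y in Ici (ω₁ / 2), jb y ^ b :=
    MeasureTheory.setIntegral_nonneg measurableSet_Ici
      (fun x _ => Real.rpow_nonneg (jb_pos x).le _)
  have hI1nn : 0 ≤ ∫ x in Ici (0:ℝ), jb x ^ (-(3/2) : ℝ) :=
    MeasureTheory.setIntegral_nonneg measurableSet_Ici
      (fun x _ => Real.rpow_nonneg (jb_pos x).le _)
  calc ∫ p in Dom ω₁, F p
      ≤ D * ((∫ x in Ici (0:ℝ), jb x ^ (-(3/2) : ℝ)) * ∫ y in Ici (ω₁ / 2), jb y ^ b) :=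
        step1.trans (step2.trans_eq step3)
    _ ≤ D * (3 * ((ω₁ / 2) ^ (b + 1) / (-(b + 1)))) := by
        apply mul_le_mul_of_nonneg_left _ hD
        exact mul_le_mul hI1 hI2 hI2nn (by norm_num)

end Aux

section Main

open Set

/-- Assembly: from the core estimate to the final bound. -/
lemma assemble (β M : ℝ) (hβ0 : 0 ≤ β) (hβ1 : β ≤ 1) (hM : 10 < M) (ω₁ : ℝ) (hω : 1 < ω₁)
    {F : ℝ × ℝ → ℝ}
    (hF0 : ∀ p ∈ Dom ω₁, 0 ≤ F p)
    (hFle : ∀ p ∈ Dom ω₁, F p ≤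
      2 * n01 M ω₁ * (jb p.1 ^ (-(3/2) : ℝ) * jb p.2 ^ (2*β + 3/2 - M/2))) :
    64 * π ^ 3 * ω₁ ^ (β - 1/2) * ∫ p in Dom ω₁, F p ≤
      (384 * π ^ 3 * (2:ℝ) ^ (-(2*β + 3/2 - M/2 + 1)) / (-(2*β + 3/2 - M/2 + 1))) *
        ω₁ ^ (4*β + 2 - M) := by
  have hω0 : (0:ℝ) < ω₁ := by linarith
  have hb : (2*β + 3/2 - M/2 : ℝ) < -1 := by linarith
  have hb1 : (0:ℝ) < -(2*β + 3/2 - M/2 + 1) := by linarith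
  have hD : 0 ≤ 2 * n01 M ω₁ := mul_nonneg (by norm_num) (n01_nonneg M ω₁)
  have hcore := core_estimate hb hω hD hF0 hFle
  have hn : n01 M ω₁ ≤ ω₁ ^ (-(M/2)) :=
    Real.rpow_le_rpow_of_nonpos hω0 (le_jb hω0.le) (by linarith)
  have hK : (0:ℝ) ≤ 384 * π ^ 3 / (-(2*β + 3/2 - M/2 + 1)) * (2:ℝ) ^ (-(2*β + 3/2 - M/2 + 1)) :=
    mul_nonneg (div_nonneg (by positivity) hb1.le) (Real.rpow_nonneg (by norm_num) _)
  calc 64 * π ^ 3 * ω₁ ^ (β - 1/2) * ∫ p in Dom ω₁, F p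
      ≤ 64 * π ^ 3 * ω₁ ^ (β - 1/2) *
          (2 * n01 M ω₁ * (3 * ((ω₁/2) ^ (2*β + 3/2 - M/2 + 1) / (-(2*β + 3/2 - M/2 + 1))))) :=
        mul_le_mul_of_nonneg_left hcore (by positivity)
    _ = (384 * π ^ 3 / (-(2*β + 3/2 - M/2 + 1))) *
          (ω₁ ^ (β - 1/2) * n01 M ω₁ * (ω₁/2) ^ (2*β + 3/2 - M/2 + 1)) := by ring
    _ = (384 * π ^ 3 / (-(2*β + 3/2 - M/2 + 1))) * (2:ℝ) ^ (-(2*β + 3/2 - M/2 + 1)) *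
          (ω₁ ^ (β - 1/2) * n01 M ω₁ * ω₁ ^ (2*β + 3/2 - M/2 + 1)) := by
        rw [Real.div_rpow hω0.le (by norm_num : (0:ℝ) ≤ 2),
          Real.rpow_neg (by norm_num : (0:ℝ) ≤ 2), div_eq_mul_inv]
        ring
    _ ≤ (384 * π ^ 3 / (-(2*β + 3/2 - M/2 + 1))) * (2:ℝ) ^ (-(2*β + 3/2 - M/2 + 1)) *
          (ω₁ ^ (β - 1/2) * ω₁ ^ (-(M/2)) * ω₁ ^ (2*β + 3/2 - M/2 + 1)) := by
        apply mul_le_mul_of_nonneg_left _ hK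
        exact mul_le_mul_of_nonneg_right
          (mul_le_mul_of_nonneg_left hn (Real.rpow_nonneg hω0.le _))
          (Real.rpow_nonneg hω0.le _)
    _ = (384 * π ^ 3 / (-(2*β + 3/2 - M/2 + 1))) * (2:ℝ) ^ (-(2*β + 3/2 - M/2 + 1)) *
          ω₁ ^ (β - 1/2 + -(M/2) + (2*β + 3/2 - M/2 + 1)) := by
        rw [← Real.rpow_add hω0, ← Real.rpow_add hω0]
    _ ≤ (384 * π ^ 3 / (-(2*β + 3/2 - M/2 + 1))) * (2:ℝ) ^ (-(2*β + 3/2 - M/2 + 1)) *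
          ω₁ ^ (4*β + 2 - M) := by
        apply mul_le_mul_of_nonneg_left _ hK
        exact Real.rpow_le_rpow_of_exponent_le hω.le (by linarith)
    _ = (384 * π ^ 3 * (2:ℝ) ^ (-(2*β + 3/2 - M/2 + 1)) / (-(2*β + 3/2 - M/2 + 1))) *
          ω₁ ^ (4*β + 2 - M) := by ring

lemma pw124 (β M : ℝ) (hβ0 : 0 ≤ β) (hβ1 : β ≤ 1) (hM : 10 < M) (ω₁ : ℝ) (hω : 1 < ω₁)
    (p : ℝ × ℝ) (hp : p ∈ Dom ω₁) :
    ((p.1 + p.2 - ω₁) * p.1 * p.2) ^ β * crossMin ω₁ p *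
      (n01 M ω₁ * n01 M (p.1 + p.2 - ω₁) * n01 M p.2) ≤
    2 * n01 M ω₁ * (jb p.1 ^ (-(3/2) : ℝ) * jb p.2 ^ (2*β + 3/2 - M/2)) := by
  obtain ⟨hx0, hxy, hs⟩ := hp
  have hw0 : 0 ≤ p.1 + p.2 - ω₁ := by linarith
  have hy0 : 0 ≤ p.2 := le_trans hx0 hxy
  have hA : (p.1 + p.2 - ω₁) ^ β * crossMin ω₁ p * n01 M (p.1 + p.2 - ω₁) ≤ 1 := by
    have e1 : (p.1 + p.2 - ω₁) ^ β ≤ jb (p.1 + p.2 - ω₁) ^ β :=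
      Real.rpow_le_rpow hw0 (le_jb hw0) hβ0
    have e2 : crossMin ω₁ p ≤ jb (p.1 + p.2 - ω₁) ^ (1/2 : ℝ) :=
      (crossMin_le_sqrt_w ω₁ p).trans (sqrt_le_jb_rpow hw0)
    calc (p.1 + p.2 - ω₁) ^ β * crossMin ω₁ p * n01 M (p.1 + p.2 - ω₁)
        ≤ jb (p.1 + p.2 - ω₁) ^ β * jb (p.1 + p.2 - ω₁) ^ (1/2 : ℝ) *
            jb (p.1 + p.2 - ω₁) ^ (-(M/2)) := by
          apply mul_le_mul_of_nonneg_right _ (n01_nonneg M _)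
          exact mul_le_mul e1 e2 (crossMin_nonneg ω₁ p) (Real.rpow_nonneg (jb_pos _).le _)
      _ = jb (p.1 + p.2 - ω₁) ^ (β + 1/2 + -(M/2)) := by
          rw [← Real.rpow_add (jb_pos _), ← Real.rpow_add (jb_pos _)]
      _ ≤ 1 := Real.rpow_le_one_of_one_le_of_nonpos (one_le_jb _) (by linarith)
  have hB : p.1 ^ β * p.2 ^ β * n01 M p.2 ≤
      jb p.1 ^ (-(3/2) : ℝ) * jb p.2 ^ (2*β + 3/2 - M/2) := by
    have e1 : p.1 ^ β ≤ jb p.2 ^ β :=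
      Real.rpow_le_rpow hx0 (le_trans hxy (le_jb hy0)) hβ0
    have e2 : p.2 ^ β ≤ jb p.2 ^ β := Real.rpow_le_rpow hy0 (le_jb hy0) hβ0
    have e3 : n01 M p.2 ≤ jb p.1 ^ (-(3/2) : ℝ) * jb p.2 ^ (3/2 - M/2) := by
      have heq : n01 M p.2 = jb p.2 ^ (-(3/2) : ℝ) * jb p.2 ^ (3/2 - M/2) := by
        rw [n01, show (-(M/2) : ℝ) = (-(3/2) : ℝ) + (3/2 - M/2) by ring,
          Real.rpow_add (jb_pos _)]
      rw [heq]
      exact mul_le_mul_of_nonneg_right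
        (Real.rpow_le_rpow_of_nonpos (jb_pos p.1) (jb_mono hx0 hxy) (by norm_num))
        (Real.rpow_nonneg (jb_pos _).le _)
    calc p.1 ^ β * p.2 ^ β * n01 M p.2
        ≤ jb p.2 ^ β * jb p.2 ^ β * (jb p.1 ^ (-(3/2) : ℝ) * jb p.2 ^ (3/2 - M/2)) := by
          apply mul_le_mul _ e3 (n01_nonneg M _)
            (mul_nonneg (Real.rpow_nonneg (jb_pos _).le _) (Real.rpow_nonneg (jb_pos _).le _))
          exact mul_le_mul e1 e2 (Real.rpow_nonneg hy0 _) (Real.rpow_nonneg (jb_pos _).le _)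
      _ = jb p.1 ^ (-(3/2) : ℝ) * jb p.2 ^ (2*β + 3/2 - M/2) := by
          rw [show (2*β + 3/2 - M/2 : ℝ) = β + (β + (3/2 - M/2)) by ring,
            Real.rpow_add (jb_pos _), Real.rpow_add (jb_pos _)]
          ring
  have hprod : ((p.1 + p.2 - ω₁) * p.1 * p.2) ^ β =
      (p.1 + p.2 - ω₁) ^ β * p.1 ^ β * p.2 ^ β := by
    rw [Real.mul_rpow (mul_nonneg hw0 hx0) hy0, Real.mul_rpow hw0 hx0]
  have hBnn : 0 ≤ p.1 ^ β * p.2 ^ β * n01 M p.2 :=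
    mul_nonneg (mul_nonneg (Real.rpow_nonneg hx0 _) (Real.rpow_nonneg hy0 _)) (n01_nonneg M _)
  have htnn : 0 ≤ n01 M ω₁ * (jb p.1 ^ (-(3/2) : ℝ) * jb p.2 ^ (2*β + 3/2 - M/2)) :=
    mul_nonneg (n01_nonneg M _)
      (mul_nonneg (Real.rpow_nonneg (jb_pos _).le _) (Real.rpow_nonneg (jb_pos _).le _))
  calc ((p.1 + p.2 - ω₁) * p.1 * p.2) ^ β * crossMin ω₁ p *
        (n01 M ω₁ * n01 M (p.1 + p.2 - ω₁) * n01 M p.2)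
      = n01 M ω₁ * (((p.1 + p.2 - ω₁) ^ β * crossMin ω₁ p * n01 M (p.1 + p.2 - ω₁)) *
          (p.1 ^ β * p.2 ^ β * n01 M p.2)) := by rw [hprod]; ring
    _ ≤ n01 M ω₁ * (1 * (jb p.1 ^ (-(3/2) : ℝ) * jb p.2 ^ (2*β + 3/2 - M/2))) := by
        apply mul_le_mul_of_nonneg_left _ (n01_nonneg M _)
        exact mul_le_mul hA hB hBnn zero_le_one
    _ = n01 M ω₁ * (jb p.1 ^ (-(3/2) : ℝ) * jb p.2 ^ (2*β + 3/2 - M/2)) := by ring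
    _ ≤ 2 * n01 M ω₁ * (jb p.1 ^ (-(3/2) : ℝ) * jb p.2 ^ (2*β + 3/2 - M/2)) := by linarith

lemma pw134 (β M : ℝ) (hβ0 : 0 ≤ β) (hβ1 : β ≤ 1) (hM : 10 < M) (ω₁ : ℝ) (hω : 1 < ω₁)
    (p : ℝ × ℝ) (hp : p ∈ Dom ω₁) :
    ((p.1 + p.2 - ω₁) * p.1 * p.2) ^ β * crossMin ω₁ p *
      (n01 M ω₁ * n01 M p.1 * n01 M p.2) ≤
    2 * n01 M ω₁ * (jb p.1 ^ (-(3/2) : ℝ) * jb p.2 ^ (2*β + 3/2 - M/2)) := by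
  obtain ⟨hx0, hxy, hs⟩ := hp
  have hw0 : 0 ≤ p.1 + p.2 - ω₁ := by linarith
  have hy0 : 0 ≤ p.2 := le_trans hx0 hxy
  have hA : p.1 ^ β * crossMin ω₁ p * n01 M p.1 ≤ jb p.1 ^ (-(3/2) : ℝ) := by
    have e1 : p.1 ^ β ≤ jb p.1 ^ β := Real.rpow_le_rpow hx0 (le_jb hx0) hβ0
    have e2 : crossMin ω₁ p ≤ jb p.1 ^ (1/2 : ℝ) :=
      (crossMin_le_sqrt_x ω₁ p).trans (sqrt_le_jb_rpow hx0)
    calc p.1 ^ β * crossMin ω₁ p * n01 M p.1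
        ≤ jb p.1 ^ β * jb p.1 ^ (1/2 : ℝ) * jb p.1 ^ (-(M/2)) := by
          apply mul_le_mul_of_nonneg_right _ (n01_nonneg M _)
          exact mul_le_mul e1 e2 (crossMin_nonneg ω₁ p) (Real.rpow_nonneg (jb_pos _).le _)
      _ = jb p.1 ^ (β + 1/2 + -(M/2)) := by
          rw [← Real.rpow_add (jb_pos _), ← Real.rpow_add (jb_pos _)]
      _ ≤ jb p.1 ^ (-(3/2) : ℝ) :=
          Real.rpow_le_rpow_of_exponent_le (one_le_jb _) (by linarith)
  have hB : (p.1 + p.2 - ω₁) ^ β ≤ 2 * jb p.2 ^ β := by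
    calc (p.1 + p.2 - ω₁) ^ β ≤ (2 * p.2) ^ β := by
          apply Real.rpow_le_rpow hw0 _ hβ0
          linarith
      _ = (2:ℝ) ^ β * p.2 ^ β := Real.mul_rpow (by norm_num) hy0
      _ ≤ 2 * jb p.2 ^ β := by
          apply mul_le_mul _ (Real.rpow_le_rpow hy0 (le_jb hy0) hβ0)
            (Real.rpow_nonneg hy0 _) (by norm_num)
          calc (2:ℝ) ^ β ≤ (2:ℝ) ^ (1:ℝ) :=
                Real.rpow_le_rpow_of_exponent_le one_le_two hβ1
            _ = 2 := Real.rpow_one 2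
  have hC : p.2 ^ β * n01 M p.2 ≤ jb p.2 ^ (β + 3/2 - M/2) := by
    calc p.2 ^ β * n01 M p.2 ≤ jb p.2 ^ β * jb p.2 ^ (-(M/2)) :=
          mul_le_mul_of_nonneg_right (Real.rpow_le_rpow hy0 (le_jb hy0) hβ0)
            (Real.rpow_nonneg (jb_pos _).le _)
      _ = jb p.2 ^ (β + -(M/2)) := by rw [← Real.rpow_add (jb_pos _)]
      _ ≤ jb p.2 ^ (β + 3/2 - M/2) :=
          Real.rpow_le_rpow_of_exponent_le (one_le_jb _) (by linarith)
  have hprod : ((p.1 + p.2 - ω₁) * p.1 * p.2) ^ β =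
      (p.1 + p.2 - ω₁) ^ β * p.1 ^ β * p.2 ^ β := by
    rw [Real.mul_rpow (mul_nonneg hw0 hx0) hy0, Real.mul_rpow hw0 hx0]
  have hAnn : 0 ≤ p.1 ^ β * crossMin ω₁ p * n01 M p.1 :=
    mul_nonneg (mul_nonneg (Real.rpow_nonneg hx0 _) (crossMin_nonneg ω₁ p)) (n01_nonneg M _)
  have hCnn : 0 ≤ p.2 ^ β * n01 M p.2 :=
    mul_nonneg (Real.rpow_nonneg hy0 _) (n01_nonneg M _)
  calc ((p.1 + p.2 - ω₁) * p.1 * p.2) ^ β * crossMin ω₁ p *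
        (n01 M ω₁ * n01 M p.1 * n01 M p.2)
      = n01 M ω₁ * ((p.1 ^ β * crossMin ω₁ p * n01 M p.1) * (p.1 + p.2 - ω₁) ^ β *
          (p.2 ^ β * n01 M p.2)) := by rw [hprod]; ring
    _ ≤ n01 M ω₁ * ((jb p.1 ^ (-(3/2) : ℝ)) * (2 * jb p.2 ^ β) *
          (jb p.2 ^ (β + 3/2 - M/2))) := by
        apply mul_le_mul_of_nonneg_left _ (n01_nonneg M _)
        apply mul_le_mul (mul_le_mul hA hB (Real.rpow_nonneg hw0 _)
          (Real.rpow_nonneg (jb_pos _).le _)) hC hCnn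
        exact mul_nonneg (Real.rpow_nonneg (jb_pos _).le _)
          (mul_nonneg (by norm_num) (Real.rpow_nonneg (jb_pos _).le _))
    _ = 2 * n01 M ω₁ * (jb p.1 ^ (-(3/2) : ℝ) * jb p.2 ^ (2*β + 3/2 - M/2)) := by
        rw [show (2*β + 3/2 - M/2 : ℝ) = β + (β + 3/2 - M/2) by ring,
          Real.rpow_add (jb_pos _)]
        ring

end Main

/-- Upper bound: C¹²⁴[n⁰¹,n⁰¹,n⁰¹](ω₁), C¹³⁴[n⁰¹,n⁰¹,n⁰¹](ω₁) ≲ ω₁^{4β + 2 − M} for ω₁ > 1. -/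
theorem C124_C134_upper_bound (β M : ℝ) (hβ0 : 0 ≤ β) (hβ1 : β ≤ 1) (hM : 10 < M) :
    ∃ C : ℝ, 0 < C ∧ ∀ ω₁ : ℝ, 1 < ω₁ →
      C124 β (n01 M) (n01 M) (n01 M) ω₁ ≤ C * ω₁ ^ (4 * β + 2 - M) ∧
      C134 β (n01 M) (n01 M) (n01 M) ω₁ ≤ C * ω₁ ^ (4 * β + 2 - M) := by
  refine ⟨384 * π ^ 3 * (2:ℝ) ^ (-(2*β + 3/2 - M/2 + 1)) / (-(2*β + 3/2 - M/2 + 1)), ?_,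
    fun ω₁ hω => ⟨?_, ?_⟩⟩
  · apply div_pos (by positivity) (by linarith)
  · have hF0 : ∀ p ∈ Dom ω₁, 0 ≤ ((p.1 + p.2 - ω₁) * p.1 * p.2) ^ β * crossMin ω₁ p *
        (n01 M ω₁ * n01 M (p.1 + p.2 - ω₁) * n01 M p.2) := by
      rintro p ⟨hx0, hxy, hs⟩
      have hw0 : 0 ≤ p.1 + p.2 - ω₁ := by linarith
      have hy0 : 0 ≤ p.2 := le_trans hx0 hxy
      exact mul_nonneg (mul_nonneg (Real.rpow_nonneg (by positivity) _) (crossMin_nonneg ω₁ p))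
        (mul_nonneg (mul_nonneg (n01_nonneg M _) (n01_nonneg M _)) (n01_nonneg M _))
    have h := assemble β M hβ0 hβ1 hM ω₁ hω hF0 (pw124 β M hβ0 hβ1 hM ω₁ hω)
    simpa only [C124, Cfull] using h
  · have hF0 : ∀ p ∈ Dom ω₁, 0 ≤ ((p.1 + p.2 - ω₁) * p.1 * p.2) ^ β * crossMin ω₁ p *
        (n01 M ω₁ * n01 M p.1 * n01 M p.2) := by
      rintro p ⟨hx0, hxy, hs⟩
      have hw0 : 0 ≤ p.1 + p.2 - ω₁ := by linarith
      have hy0 : 0 ≤ p.2 := le_trans hx0 hxy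
      exact mul_nonneg (mul_nonneg (Real.rpow_nonneg (by positivity) _) (crossMin_nonneg ω₁ p))
        (mul_nonneg (mul_nonneg (n01_nonneg M _) (n01_nonneg M _)) (n01_nonneg M _))
    have h := assemble β M hβ0 hβ1 hM ω₁ hω hF0 (pw134 β M hβ0 hβ1 hM ω₁ hω)
    simpa only [C134, Cfull] using h
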